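/- arXiv:1606.08925 — 6 statements merged into one kernel-verified Lean document; each statement's English description precedes it below -/
import Mathlib

section
/- Let V be a finite-dimensional real inner product space and A : V → V a self-adjoint linear map. Let U and W be linear subspaces of V such that U ∩ W = {0} and such that ⟨A v, v⟩ > 0 for every nonzero v ∈ U + W. Then the linear map F : U × W → U × W defined by F(u, w) = ( P_U(A(u+w)), P_W(A(u+w)) ), where P_U and P_W denote the orthogonal projections of V onto U and W respectively, is bijective (invertible). -/
open scoped RealInnerProductSpace

/-- Abstract form of Lemma 1: if `A` is a self-adjoint operator on a finite-dimensional real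
inner product space `V`, `U` and `W` are subspaces with trivial intersection, and
`⟨A v, v⟩ > 0` for every nonzero `v ∈ U + W`, then the operator
`F(u, w) = (P_U (A (u + w)), P_W (A (u + w)))` is invertible on `U × W`. -/
theorem F_invertible
    (V : Type*) [NormedAddCommGroup V] [InnerProductSpace ℝ V] [FiniteDimensional ℝ V]
    (A : V →ₗ[ℝ] V) (hA : ∀ x y : V, ⟪A x, y⟫ = ⟪x, A y⟫)
    (U W : Submodule ℝ V) (hUW : U ⊓ W = ⊥)
    (hpos : ∀ v ∈ U ⊔ W, v ≠ 0 → 0 < ⟪A v, v⟫) :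
    Function.Bijective (fun p : U × W =>
      ((U.orthogonalProjectionOnto (A ((p.1 : V) + (p.2 : V))),
        W.orthogonalProjectionOnto (A ((p.1 : V) + (p.2 : V)))) : U × W)) := by
  set F : U × W →ₗ[ℝ] U × W :=
    { toFun := fun p =>
        (U.orthogonalProjectionOnto (A ((p.1 : V) + (p.2 : V))),
         W.orthogonalProjectionOnto (A ((p.1 : V) + (p.2 : V))))
      map_add' := by
        intro p q
        ext <;> simp [inner_add_left] <;>
          simp [map_add, add_add_add_comm]
      map_smul' := by
        intro c p
        ext <;> simp [smul_add, map_smul] } with hF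
  have hinj : Function.Injective F := by
    rw [← LinearMap.ker_eq_bot, LinearMap.ker_eq_bot']
    rintro ⟨u, w⟩ h0
    have h1 : (U.orthogonalProjectionOnto (A ((u : V) + w)) : V) = 0 := by
      have := congrArg Prod.fst h0
      simpa [hF] using congrArg (Subtype.val) this
    have h2 : (W.orthogonalProjectionOnto (A ((u : V) + w)) : V) = 0 := by
      have := congrArg Prod.snd h0
      simpa [hF] using congrArg (Subtype.val) this
    have h1' : U.orthogonalProjectionOnto (A ((u : V) + w)) = 0 := Submodule.coe_eq_zero.mp h1
    have h2' : W.orthogonalProjectionOnto (A ((u : V) + w)) = 0 := Submodule.coe_eq_zero.mp h2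
    have hu : ⟪A ((u : V) + w), (u : V)⟫ = 0 := by
      rw [← Submodule.inner_orthogonalProjectionOnto_eq_of_mem_right (E := V) (K := U) u (A ((u : V) + w)), h1',
        inner_zero_left]
    have hw : ⟪A ((u : V) + w), (w : V)⟫ = 0 := by
      rw [← Submodule.inner_orthogonalProjectionOnto_eq_of_mem_right (E := V) (K := W) w (A ((u : V) + w)), h2',
        inner_zero_left]
    have hsum : ⟪A ((u : V) + w), (u : V) + w⟫ = 0 := by
      rw [inner_add_right, hu, hw, add_zero]
    have hmem : (u : V) + w ∈ U ⊔ W :=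
      Submodule.add_mem_sup u.2 w.2
    have hzero : (u : V) + w = 0 := by
      by_contra hne
      exact (hpos _ hmem hne).ne' hsum
    have huw : (u : V) = -(w : V) := by exact eq_neg_of_add_eq_zero_left hzero
    have huU : (u : V) ∈ U ⊓ W := by
      refine ⟨u.2, ?_⟩
      rw [huw]; exact W.neg_mem w.2
    rw [hUW] at huU
    have hu0 : (u : V) = 0 := huU
    have hw0 : (w : V) = 0 := by
      have := hzero; rw [hu0, zero_add] at this; exact this
    ext
    · exact hu0
    · exact hw0
  exact ⟨hinj, LinearMap.injective_iff_surjective.mp hinj⟩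
end

section
/- Let L* be a J×J real symmetric positive semidefinite matrix of rank K whose K positive eigenvalues are distinct, with eigendecomposition L* = U₁* D₁* U₁*ᵀ, where U₁* ∈ ℝ^{J×K} has orthonormal columns (U₁*ᵀU₁* = I_K) and D₁* is the K×K diagonal matrix of the positive eigenvalues. Then for every constant κ > 0 there exist constants ε > 0 and γ₀ > 0 such that for every γ ∈ (0, γ₀], every J×K real matrix U₁ with U₁ᵀU₁ = I_K and ‖U₁ − U₁*‖∞ = γ, and every K×K diagonal matrix D₁ with ‖D₁ − D₁*‖∞ ≤ κ γ, one has ‖U₁ D₁ U₁ᵀ − L*‖∞ ≥ ε γ. -/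
open Matrix

attribute [local instance] Matrix.normedAddCommGroup

lemma myNormTranspose {m n : Type*} [Fintype m] [Fintype n] (A : Matrix m n ℝ) : ‖Aᵀ‖ = ‖A‖ := by
  apply le_antisymm
  · rw [Matrix.norm_le_iff (norm_nonneg A)]
    intro i j; exact Matrix.norm_entry_le_entrywise_sup_norm A
  · rw [Matrix.norm_le_iff (norm_nonneg Aᵀ)]
    intro i j; exact Matrix.norm_entry_le_entrywise_sup_norm Aᵀ

lemma myEntryLe {m n : Type*} [Fintype m] [Fintype n] (A : Matrix m n ℝ) (i : m) (j : n) :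
    |A i j| ≤ ‖A‖ := by
  rw [← Real.norm_eq_abs]; exact Matrix.norm_entry_le_entrywise_sup_norm A

lemma myNormMul {l m n : Type*} [Fintype l] [Fintype m] [Fintype n]
    (A : Matrix l m ℝ) (B : Matrix m n ℝ) :
    ‖A * B‖ ≤ (Fintype.card m : ℝ) * (‖A‖ * ‖B‖) := by
  rw [Matrix.norm_le_iff (by positivity)]
  intro i j
  calc ‖(A * B) i j‖ = |∑ k, A i k * B k j| := rfl
    _ ≤ ∑ k, |A i k * B k j| := Finset.abs_sum_le_sum_abs _ _
    _ ≤ ∑ _k : m, ‖A‖ * ‖B‖ := by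
        apply Finset.sum_le_sum
        intro k _
        rw [abs_mul]
        exact mul_le_mul (Matrix.norm_entry_le_entrywise_sup_norm A)
          (Matrix.norm_entry_le_entrywise_sup_norm B) (abs_nonneg _) (norm_nonneg _)
    _ = (Fintype.card m : ℝ) * (‖A‖ * ‖B‖) := by
        rw [Finset.sum_const]; simp [Finset.card_univ]

lemma myNormMulLe {l m n : Type*} [Fintype l] [Fintype m] [Fintype n]
    (A : Matrix l m ℝ) (B : Matrix m n ℝ) {x y : ℝ}
    (hx : ‖A‖ ≤ x) (hy : ‖B‖ ≤ y) (hx0 : 0 ≤ x) :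
    ‖A * B‖ ≤ (Fintype.card m : ℝ) * (x * y) :=
  le_trans (myNormMul A B)
    (mul_le_mul_of_nonneg_left (mul_le_mul hx hy (norm_nonneg B) hx0) (by positivity))

lemma myNormDiagLe {n : Type*} [Fintype n] [DecidableEq n] (v : n → ℝ) (c : ℝ) (hc : 0 ≤ c)
    (h : ∀ i, |v i| ≤ c) : ‖Matrix.diagonal v‖ ≤ c := by
  rw [Matrix.norm_le_iff hc]
  intro i j
  by_cases hij : i = j
  · subst hij; simpa using h i
  · simp [Matrix.diagonal_apply_ne _ hij, hc]

set_option maxHeartbeats 1000000 in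
/-- Lemma 9 (eigenvalue perturbation): let `L* = U₁* D₁* U₁*ᵀ` be a rank-`K` symmetric PSD
matrix with distinct positive eigenvalues. For every `κ > 0` there are `ε > 0` and `γ₀ > 0`
such that for all `0 < γ ≤ γ₀`, all `U₁` with orthonormal columns and `‖U₁ - U₁*‖∞ = γ`, and
all diagonal `D₁` with `‖D₁ - D₁*‖∞ ≤ κ γ`, one has `‖U₁ D₁ U₁ᵀ - L*‖∞ ≥ ε γ`.
(Here the `Matrix` norm is the entrywise maximum norm.) -/
theorem eigenvalue_perturbation
    (J K : ℕ) (Lstar : Matrix (Fin J) (Fin J) ℝ)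
    (U1star : Matrix (Fin J) (Fin K) ℝ) (d : Fin K → ℝ)
    (hU : U1starᵀ * U1star = 1)
    (hdpos : ∀ i, 0 < d i)
    (hdistinct : Function.Injective d)
    (hdecomp : Lstar = U1star * Matrix.diagonal d * U1starᵀ)
    (hpsd : Lstar.PosSemidef) (hrank : Lstar.rank = K) :
    ∀ κ > (0 : ℝ), ∃ ε > (0 : ℝ), ∃ γ₀ > (0 : ℝ), ∀ γ : ℝ, 0 < γ → γ ≤ γ₀ →
      ∀ U1 : Matrix (Fin J) (Fin K) ℝ, U1ᵀ * U1 = 1 → ‖U1 - U1star‖ = γ →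
      ∀ e : Fin K → ℝ, ‖Matrix.diagonal e - Matrix.diagonal d‖ ≤ κ * γ →
      ε * γ ≤ ‖U1 * Matrix.diagonal e * U1ᵀ - Lstar‖ := by
  intro κ hκ
  -- degenerate case K = 0
  rcases Nat.eq_zero_or_pos K with hK0 | hKpos
  · subst hK0
    refine ⟨1, one_pos, 1, one_pos, ?_⟩
    intro γ hγ _ U1 _ hE e _
    exfalso
    have : ‖U1 - U1star‖ ≤ 0 := by
      rw [Matrix.norm_le_iff le_rfl]; intro i j; exact j.elim0
    linarith [hE ▸ this]
  -- degenerate case J = 0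
  rcases Nat.eq_zero_or_pos J with hJ0 | hJpos
  · exfalso
    subst hJ0
    have i : Fin K := ⟨0, hKpos⟩
    have := congrFun (congrFun hU i) i
    simp [Matrix.mul_apply, Matrix.one_apply] at this
  -- main case
  haveI : Nonempty (Fin K) := ⟨⟨0, hKpos⟩⟩
  -- constants
  set b : ℝ := ‖U1star‖ with hbdef
  have hb0 : 0 ≤ b := norm_nonneg _
  set dmin : ℝ := Finset.univ.inf' Finset.univ_nonempty d with hdmindef
  have hdmin0 : 0 < dmin := (Finset.lt_inf'_iff _).mpr fun i _ => hdpos i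
  have hdmin_le : ∀ i, dmin ≤ d i := fun i => Finset.inf'_le d (Finset.mem_univ i)
  set dmax : ℝ := Finset.univ.sup' Finset.univ_nonempty d with hdmaxdef
  have hdmax_ge : ∀ i, d i ≤ dmax := fun i => Finset.le_sup' d (Finset.mem_univ i)
  have hdmax0 : 0 < dmax := lt_of_lt_of_le (hdpos ⟨0, hKpos⟩) (hdmax_ge _)
  set sep : ℝ := Finset.univ.inf' Finset.univ_nonempty
      (fun p : Fin K × Fin K => if p.1 = p.2 then 1 else |d p.1 - d p.2|) with hsepdef
  have hsep0 : 0 < sep := by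
    rw [hsepdef, Finset.lt_inf'_iff]
    intro p _
    by_cases h : p.1 = p.2
    · simp [h]
    · simp only [h, if_false]
      exact abs_sub_pos.mpr fun hc => h (hdistinct hc)
  have hsep_le : ∀ i j, i ≠ j → sep ≤ |d i - d j| := by
    intro i j h
    have := Finset.inf'_le (fun p : Fin K × Fin K => if p.1 = p.2 then 1 else |d p.1 - d p.2|)
      (Finset.mem_univ (i, j))
    rw [← hsepdef] at this
    simpa [h] using this
  set Cq : ℝ := 2 * K * ((J : ℝ) * b) * κ + (K : ℝ) ^ 2 * ((J : ℝ) * b) ^ 2 * (dmax + κ)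
    with hCqdef
  have hCq0 : 0 ≤ Cq := by
    rw [hCqdef]
    have h1 : (0 : ℝ) ≤ 2 * K * ((J : ℝ) * b) * κ := by
      apply mul_nonneg (mul_nonneg (by positivity) (by positivity)) hκ.le
    have h2 : (0 : ℝ) ≤ (K : ℝ) ^ 2 * ((J : ℝ) * b) ^ 2 * (dmax + κ) := by
      apply mul_nonneg (by positivity); linarith
    linarith
  set C₀ : ℝ := (K : ℝ) * dmin⁻¹ * ((J : ℝ) * b + (K : ℝ) * b * ((J : ℝ) ^ 2 * b ^ 2)
      + (K : ℝ) ^ 2 * (b + 1) * (dmax + κ) * (sep⁻¹ * ((J : ℝ) ^ 2 * b ^ 2))) with hC0def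
  set C₁ : ℝ := (K : ℝ) * dmin⁻¹ * ((K : ℝ) * b * (dmax * J + Cq) + (K : ℝ) * κ
      + (K : ℝ) ^ 2 * (b + 1) * (dmax + κ) * (sep⁻¹ * (dmax * J + Cq) + (J : ℝ))) with hC1def
  clear_value b dmin dmax sep Cq C₀ C₁
  refine ⟨1 / (2 * |C₀| + 2), by positivity, min 1 (1 / (2 * |C₁| + 2)),
    lt_min one_pos (by positivity), ?_⟩
  intro γ hγpos hγle U1 hU1 hE e hDel
  have hγ1 : γ ≤ 1 := le_trans hγle (min_le_left _ _)
  have hγ0 : (0 : ℝ) ≤ γ := hγpos.le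
  have hγ2 : γ * (2 * |C₁| + 2) ≤ 1 :=
    (le_div_iff₀ (by positivity)).mp (le_trans hγle (min_le_right _ _))
  -- matrices
  set E : Matrix (Fin J) (Fin K) ℝ := U1 - U1star with hEdef
  set A : Matrix (Fin K) (Fin K) ℝ := U1starᵀ * E with hAdef
  set D : Matrix (Fin K) (Fin K) ℝ := Matrix.diagonal d with hDdef
  set Δm : Matrix (Fin K) (Fin K) ℝ := Matrix.diagonal e - Matrix.diagonal d with hΔdef
  set M : Matrix (Fin J) (Fin J) ℝ := U1 * Matrix.diagonal e * U1ᵀ - Lstar with hMdef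
  set N : Matrix (Fin K) (Fin K) ℝ := U1starᵀ * M * U1star with hNdef
  set Q : Matrix (Fin K) (Fin K) ℝ := A * Δm + Δm * Aᵀ + A * ((D + Δm) * Aᵀ) with hQdef
  clear_value E A D Δm M N Q
  have hEnorm : ‖E‖ = γ := hE
  have hU1e : U1 = U1star + E := by rw [hEdef]; abel
  have hDe : Matrix.diagonal e = D + Δm := by rw [hΔdef, hDdef]; abel
  have hUtU1 : U1starᵀ * U1 = 1 + A := by rw [hU1e, Matrix.mul_add, hU, hAdef]
  have hU1tU : U1ᵀ * U1star = 1 + Aᵀ := by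
    have := congrArg Matrix.transpose hUtU1
    simpa [Matrix.transpose_mul] using this
  -- constraint entrywise
  have hconstr : ∀ i j, A i j + A j i + (Eᵀ * E) i j = 0 := by
    intro i j
    have h1 := congrFun (congrFun hU1 i) j
    have h2 := congrFun (congrFun hU i) j
    rw [hU1e] at h1
    simp only [Matrix.mul_apply, Matrix.transpose_apply, Matrix.add_apply, hAdef] at h1 h2 ⊢
    simp only [add_mul, mul_add, Finset.sum_add_distrib] at h1
    have hcomm : ∑ k, E k i * U1star k j = ∑ k, U1star k j * E k i :=
      Finset.sum_congr rfl fun k _ => mul_comm _ _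
    rw [hcomm] at h1
    linarith only [h1, h2]
  -- identity for N
  have hUM : N = (1 + A) * ((D + Δm) * (1 + Aᵀ)) - D := by
    calc N = U1starᵀ * (U1 * Matrix.diagonal e * U1ᵀ) * U1star
          - U1starᵀ * Lstar * U1star := by
          rw [hNdef, hMdef, Matrix.mul_sub, Matrix.sub_mul]
      _ = (U1starᵀ * U1) * ((D + Δm) * (U1ᵀ * U1star))
          - (U1starᵀ * U1star) * (D * (U1starᵀ * U1star)) := by
          rw [hdecomp, ← hDe]; simp only [Matrix.mul_assoc]
      _ = (1 + A) * ((D + Δm) * (1 + Aᵀ)) - D := by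
          rw [hUtU1, hU1tU, hU, Matrix.mul_one, Matrix.one_mul]
  have idN : N = Δm + (A * D + D * Aᵀ) + Q := by
    rw [hUM, hQdef]; noncomm_ring
  -- identity for E * D
  have hMU : M * U1star = (U1star + E) * ((D + Δm) * (1 + Aᵀ)) - U1star * D := by
    calc M * U1star
        = U1 * ((D + Δm) * (U1ᵀ * U1star)) - U1star * (D * (U1starᵀ * U1star)) := by
          rw [hMdef, Matrix.sub_mul, hdecomp, ← hDe]; simp only [Matrix.mul_assoc]
      _ = (U1star + E) * ((D + Δm) * (1 + Aᵀ)) - U1star * D := by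
          rw [hU1tU, hU, Matrix.mul_one, ← hU1e]
  have idED : E * D = M * U1star
      - (U1star * Δm + E * Δm + U1star * ((D + Δm) * Aᵀ) + E * ((D + Δm) * Aᵀ)) := by
    rw [hMU]
    simp only [Matrix.mul_add, Matrix.add_mul, Matrix.mul_one]
    abel
  -- basic norm bounds
  have hbT : ‖U1starᵀ‖ ≤ b := by rw [myNormTranspose]; exact hbdef.ge
  have hEle : ‖E‖ ≤ γ := hEnorm.le
  have hETle : ‖Eᵀ‖ ≤ γ := by rw [myNormTranspose]; exact hEnorm.le
  have hAle : ‖A‖ ≤ (J : ℝ) * (b * γ) := by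
    rw [hAdef]
    simpa [Fintype.card_fin] using myNormMulLe U1starᵀ E hbT hEle hb0
  have hATle : ‖Aᵀ‖ ≤ (J : ℝ) * (b * γ) := by rw [myNormTranspose]; exact hAle
  have hJbγ0 : (0 : ℝ) ≤ (J : ℝ) * (b * γ) :=
    mul_nonneg (Nat.cast_nonneg J) (mul_nonneg hb0 hγ0)
  have hDle : ‖D‖ ≤ dmax := by
    rw [hDdef]
    exact myNormDiagLe d dmax hdmax0.le fun i => by
      rw [abs_of_pos (hdpos i)]; exact hdmax_ge i
  have hDΔle : ‖D + Δm‖ ≤ dmax + κ := by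
    have h1 : ‖Δm‖ ≤ κ := le_trans hDel (by linarith only [mul_nonneg hκ.le (sub_nonneg.mpr hγ1)])
    exact le_trans (norm_add_le _ _) (by linarith only [hDle, h1])
  have hdκ0 : (0 : ℝ) ≤ dmax + κ := by linarith only [hdmax0.le, hκ.le]
  have hκγ0 : (0 : ℝ) ≤ κ * γ := mul_nonneg hκ.le hγ0
  -- bound on ‖N‖
  have hN1 : ‖U1starᵀ * M‖ ≤ (J : ℝ) * (b * ‖M‖) := by
    simpa [Fintype.card_fin] using myNormMulLe U1starᵀ M hbT le_rfl hb0
  have hNle : ‖N‖ ≤ (J : ℝ) ^ 2 * b ^ 2 * ‖M‖ := by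
    have h2 : ‖N‖ ≤ (J : ℝ) * (((J : ℝ) * (b * ‖M‖)) * b) := by
      rw [hNdef]
      simpa [Fintype.card_fin] using myNormMulLe (U1starᵀ * M) U1star hN1 hbdef.ge
        (mul_nonneg (Nat.cast_nonneg J) (mul_nonneg hb0 (norm_nonneg M)))
    calc ‖N‖ ≤ (J : ℝ) * (((J : ℝ) * (b * ‖M‖)) * b) := h2
      _ = (J : ℝ) ^ 2 * b ^ 2 * ‖M‖ := by ring
  -- bound on ‖Q‖
  have t1 : ‖A * Δm‖ ≤ (K : ℝ) * (((J : ℝ) * (b * γ)) * (κ * γ)) := by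
    simpa [Fintype.card_fin] using myNormMulLe A Δm hAle hDel hJbγ0
  have t2 : ‖Δm * Aᵀ‖ ≤ (K : ℝ) * ((κ * γ) * ((J : ℝ) * (b * γ))) := by
    simpa [Fintype.card_fin] using myNormMulLe Δm Aᵀ hDel hATle hκγ0
  have tIn0 : ‖(D + Δm) * Aᵀ‖ ≤ (K : ℝ) * ((dmax + κ) * ((J : ℝ) * (b * γ))) := by
    simpa [Fintype.card_fin] using myNormMulLe (D + Δm) Aᵀ hDΔle hATle hdκ0
  have t3 : ‖A * ((D + Δm) * Aᵀ)‖
      ≤ (K : ℝ) * (((J : ℝ) * (b * γ)) * ((K : ℝ) * ((dmax + κ) * ((J : ℝ) * (b * γ))))) := by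
    simpa [Fintype.card_fin] using myNormMulLe A ((D + Δm) * Aᵀ) hAle tIn0 hJbγ0
  have hQle : ‖Q‖ ≤ Cq * γ ^ 2 := by
    have h5 : ‖Q‖ ≤ ‖A * Δm‖ + ‖Δm * Aᵀ‖ + ‖A * ((D + Δm) * Aᵀ)‖ := by
      rw [hQdef]
      exact le_trans (norm_add_le _ _) (by linarith only [norm_add_le (A * Δm) (Δm * Aᵀ), t3])
    calc ‖Q‖ ≤ (K : ℝ) * (((J : ℝ) * (b * γ)) * (κ * γ))
        + (K : ℝ) * ((κ * γ) * ((J : ℝ) * (b * γ)))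
        + (K : ℝ) * (((J : ℝ) * (b * γ)) * ((K : ℝ) * ((dmax + κ) * ((J : ℝ) * (b * γ))))) := by
          linarith only [h5, t1, t2, t3]
      _ = Cq * γ ^ 2 := by rw [hCqdef]; ring
  -- diagonal entries of A
  have hEtE : ‖Eᵀ * E‖ ≤ (J : ℝ) * (γ * γ) := by
    simpa [Fintype.card_fin] using myNormMulLe Eᵀ E hETle hEle hγ0
  have hAii : ∀ i, |A i i| ≤ (J : ℝ) * γ ^ 2 / 2 := by
    intro i
    have h := hconstr i i
    obtain ⟨ha1, ha2⟩ := abs_le.mp (le_trans (myEntryLe (Eᵀ * E) i i) hEtE)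
    rw [abs_le]
    constructor <;> linarith only [h, ha1, ha2]
  -- the bound RΔ
  set RΔ : ℝ := (J : ℝ) ^ 2 * b ^ 2 * ‖M‖ + (dmax * (J : ℝ) + Cq) * γ ^ 2 with hRΔdef
  clear_value RΔ
  have hRΔ0 : 0 ≤ RΔ := by
    rw [hRΔdef]
    have h1 : (0 : ℝ) ≤ (J : ℝ) ^ 2 * b ^ 2 * ‖M‖ :=
      mul_nonneg (mul_nonneg (by positivity) (sq_nonneg b)) (norm_nonneg _)
    have h2 : (0 : ℝ) ≤ (dmax * (J : ℝ) + Cq) * γ ^ 2 :=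
      mul_nonneg (add_nonneg (mul_nonneg hdmax0.le (Nat.cast_nonneg J)) hCq0) (sq_nonneg γ)
    linarith only [h1, h2]
  have hdiag : ∀ i, |e i - d i| ≤ RΔ := by
    intro i
    have hEq := congrFun (congrFun idN i) i
    simp only [hΔdef, hDdef, Matrix.add_apply, Matrix.sub_apply, Matrix.mul_diagonal,
      Matrix.diagonal_mul, Matrix.diagonal_apply_eq, Matrix.transpose_apply] at hEq
    obtain ⟨hn1, hn2⟩ := abs_le.mp (le_trans (myEntryLe N i i) hNle)
    obtain ⟨hq1, hq2⟩ := abs_le.mp (le_trans (myEntryLe Q i i) hQle)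
    obtain ⟨ha1, ha2⟩ := abs_le.mp (hAii i)
    have hup : d i * A i i ≤ dmax * ((J : ℝ) * γ ^ 2 / 2) :=
      le_trans (mul_le_mul_of_nonneg_left ha2 (hdpos i).le)
        (mul_le_mul_of_nonneg_right (hdmax_ge i) (by positivity))
    have hlo : -(dmax * ((J : ℝ) * γ ^ 2 / 2)) ≤ d i * A i i := by
      have h1 : d i * (-((J : ℝ) * γ ^ 2 / 2)) ≤ d i * A i i :=
        mul_le_mul_of_nonneg_left (by linarith) (hdpos i).le
      have h2 : d i * ((J : ℝ) * γ ^ 2 / 2) ≤ dmax * ((J : ℝ) * γ ^ 2 / 2) :=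
        mul_le_mul_of_nonneg_right (hdmax_ge i) (by positivity)
      linarith only [h1, h2]
    rw [hRΔdef, abs_le]
    constructor <;> linarith only [hEq, hup, hlo, hn1, hn2, hq1, hq2]
  have hΔref : ‖Δm‖ ≤ RΔ := by
    rw [Matrix.norm_le_iff hRΔ0]
    intro i j
    rw [Real.norm_eq_abs]
    by_cases h : i = j
    · subst h
      simpa [hΔdef, Matrix.sub_apply, Matrix.diagonal_apply_eq] using hdiag i
    · simpa [hΔdef, Matrix.sub_apply, Matrix.diagonal_apply_ne _ h] using hRΔ0
  -- the bound RA on ‖A‖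
  set RA : ℝ := sep⁻¹ * RΔ + (J : ℝ) * γ ^ 2 with hRAdef
  clear_value RA
  have hsRΔ0 : 0 ≤ sep⁻¹ * RΔ := mul_nonneg (inv_nonneg.mpr hsep0.le) hRΔ0
  have hRA0 : 0 ≤ RA := by
    rw [hRAdef]
    have : (0 : ℝ) ≤ (J : ℝ) * γ ^ 2 := by positivity
    linarith only [this, hsRΔ0]
  have hAnorm : ‖A‖ ≤ RA := by
    rw [Matrix.norm_le_iff hRA0]
    intro i j
    rw [Real.norm_eq_abs]
    by_cases hij : i = j
    · subst hij
      have h1 := hAii i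
      have h3 : (0 : ℝ) ≤ (J : ℝ) * γ ^ 2 := by positivity
      rw [hRAdef]
      linarith only [h1, h3, hsRΔ0]
    · have hEq := congrFun (congrFun idN i) j
      simp only [hΔdef, hDdef, Matrix.add_apply, Matrix.sub_apply, Matrix.mul_diagonal,
        Matrix.diagonal_mul, Matrix.diagonal_apply_ne _ hij, Matrix.transpose_apply,
        sub_zero, zero_add, sub_self] at hEq
      have h2 := hconstr j i
      have key : A i j * (d j - d i) = N i j - Q i j + d i * ((Eᵀ * E) j i) := by
        linear_combination (-1 : ℝ) * hEq - d i * h2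
      have h3 : sep * |A i j| ≤ |A i j * (d j - d i)| := by
        rw [abs_mul, mul_comm]
        exact mul_le_mul_of_nonneg_left (hsep_le j i fun h => hij h.symm) (abs_nonneg _)
      have h4 : |A i j * (d j - d i)| ≤ RΔ := by
        rw [key, hRΔdef]
        obtain ⟨hn1, hn2⟩ := abs_le.mp (le_trans (myEntryLe N i j) hNle)
        obtain ⟨hq1, hq2⟩ := abs_le.mp (le_trans (myEntryLe Q i j) hQle)
        obtain ⟨he1, he2⟩ := abs_le.mp (le_trans (myEntryLe (Eᵀ * E) j i) hEtE)
        have hup : d i * ((Eᵀ * E) j i) ≤ dmax * ((J : ℝ) * (γ * γ)) :=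
          le_trans (mul_le_mul_of_nonneg_left he2 (hdpos i).le)
            (mul_le_mul_of_nonneg_right (hdmax_ge i) (by positivity))
        have hlo : -(dmax * ((J : ℝ) * (γ * γ))) ≤ d i * ((Eᵀ * E) j i) := by
          have ha : d i * (-((J : ℝ) * (γ * γ))) ≤ d i * ((Eᵀ * E) j i) :=
            mul_le_mul_of_nonneg_left (by linarith) (hdpos i).le
          have hb2 : d i * ((J : ℝ) * (γ * γ)) ≤ dmax * ((J : ℝ) * (γ * γ)) :=
            mul_le_mul_of_nonneg_right (hdmax_ge i) (by positivity)
          linarith only [ha, hb2]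
        rw [abs_le]
        constructor <;> linarith only [hn1, hn2, hq1, hq2, hup, hlo]
      have h5 := mul_le_mul_of_nonneg_left (le_trans h3 h4) (inv_nonneg.mpr hsep0.le)
      rw [← mul_assoc, inv_mul_cancel₀ hsep0.ne', one_mul] at h5
      rw [hRAdef]
      have h6 : (0 : ℝ) ≤ (J : ℝ) * γ ^ 2 := by positivity
      linarith only [h5, h6]
  have hATRA : ‖Aᵀ‖ ≤ RA := by rw [myNormTranspose]; exact hAnorm
  -- bound on ‖E * D‖
  have tM : ‖M * U1star‖ ≤ (J : ℝ) * (‖M‖ * b) := by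
    simpa [Fintype.card_fin] using myNormMulLe M U1star le_rfl hbdef.ge (norm_nonneg M)
  have tU : ‖U1star * Δm‖ ≤ (K : ℝ) * (b * RΔ) := by
    simpa [Fintype.card_fin] using myNormMulLe U1star Δm hbdef.ge hΔref hb0
  have tE : ‖E * Δm‖ ≤ (K : ℝ) * (γ * (κ * γ)) := by
    simpa [Fintype.card_fin] using myNormMulLe E Δm hEle hDel hγ0
  have tIn : ‖(D + Δm) * Aᵀ‖ ≤ (K : ℝ) * ((dmax + κ) * RA) := by
    simpa [Fintype.card_fin] using myNormMulLe (D + Δm) Aᵀ hDΔle hATRA hdκ0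
  have tU2 : ‖U1star * ((D + Δm) * Aᵀ)‖ ≤ (K : ℝ) * (b * ((K : ℝ) * ((dmax + κ) * RA))) := by
    simpa [Fintype.card_fin] using myNormMulLe U1star ((D + Δm) * Aᵀ) hbdef.ge tIn hb0
  have hE1 : ‖E‖ ≤ 1 := by rw [hEnorm]; exact hγ1
  have tE2 : ‖E * ((D + Δm) * Aᵀ)‖ ≤ (K : ℝ) * (1 * ((K : ℝ) * ((dmax + κ) * RA))) := by
    simpa [Fintype.card_fin] using myNormMulLe E ((D + Δm) * Aᵀ) hE1 tIn zero_le_one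
  have hEDle : ‖E * D‖ ≤ (J : ℝ) * (‖M‖ * b) + ((K : ℝ) * (b * RΔ) + (K : ℝ) * (γ * (κ * γ))
      + (K : ℝ) * (b * ((K : ℝ) * ((dmax + κ) * RA)))
      + (K : ℝ) * (1 * ((K : ℝ) * ((dmax + κ) * RA)))) := by
    rw [idED]
    have h1 := norm_sub_le (M * U1star)
      (U1star * Δm + E * Δm + U1star * ((D + Δm) * Aᵀ) + E * ((D + Δm) * Aᵀ))
    have h2 := norm_add_le (U1star * Δm + E * Δm + U1star * ((D + Δm) * Aᵀ))
      (E * ((D + Δm) * Aᵀ))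
    have h3 := norm_add_le (U1star * Δm + E * Δm) (U1star * ((D + Δm) * Aᵀ))
    have h4 := norm_add_le (U1star * Δm) (E * Δm)
    linarith only [h1, h2, h3, h4, tM, tU, tE, tU2, tE2]
  -- recover γ = ‖E‖
  have hDinv : D * Matrix.diagonal (fun i => (d i)⁻¹) = 1 := by
    rw [hDdef, Matrix.diagonal_mul_diagonal]
    have h : (fun i => d i * (d i)⁻¹) = fun _ => (1 : ℝ) :=
      funext fun i => mul_inv_cancel₀ (hdpos i).ne'
    rw [h, Matrix.diagonal_one]
  have hEeq : E = (E * D) * Matrix.diagonal (fun i => (d i)⁻¹) := by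
    rw [Matrix.mul_assoc, hDinv, Matrix.mul_one]
  have hdinvle : ‖Matrix.diagonal (fun i => (d i)⁻¹)‖ ≤ dmin⁻¹ :=
    myNormDiagLe _ _ (inv_nonneg.mpr hdmin0.le) fun i => by
      rw [abs_of_pos (inv_pos.mpr (hdpos i))]
      exact inv_anti₀ hdmin0 (hdmin_le i)
  have hγE : γ ≤ (K : ℝ) * (‖E * D‖ * dmin⁻¹) := by
    rw [← hEnorm]
    calc ‖E‖ = ‖(E * D) * Matrix.diagonal (fun i => (d i)⁻¹)‖ := by rw [← hEeq]
      _ ≤ (K : ℝ) * (‖E * D‖ * dmin⁻¹) := by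
          simpa [Fintype.card_fin] using
            myNormMulLe (E * D) (Matrix.diagonal fun i => (d i)⁻¹) le_rfl hdinvle
              (norm_nonneg _)
  -- key inequality
  have hkey : γ ≤ C₀ * ‖M‖ + C₁ * γ ^ 2 := by
    have h5 := mul_le_mul_of_nonneg_right hEDle (inv_nonneg.mpr hdmin0.le)
    have h6 := mul_le_mul_of_nonneg_left h5 (Nat.cast_nonneg K : (0 : ℝ) ≤ (K : ℝ))
    have h7 := le_trans hγE h6
    calc γ ≤ _ := h7
      _ = C₀ * ‖M‖ + C₁ * γ ^ 2 := by
          rw [hRAdef, hRΔdef, hC0def, hC1def, hCqdef]; ring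
  -- finish
  have habs0 : C₀ * ‖M‖ + C₁ * γ ^ 2 ≤ |C₀| * ‖M‖ + |C₁| * γ ^ 2 := by
    have h1 : C₀ * ‖M‖ ≤ |C₀| * ‖M‖ :=
      mul_le_mul_of_nonneg_right (le_abs_self C₀) (norm_nonneg M)
    have h2 : C₁ * γ ^ 2 ≤ |C₁| * γ ^ 2 :=
      mul_le_mul_of_nonneg_right (le_abs_self C₁) (sq_nonneg γ)
    linarith only [h1, h2]
  have h2a := mul_le_mul_of_nonneg_right hγ2 hγ0
  have h2 : |C₁| * γ ^ 2 ≤ γ / 2 := by linarith only [h2a, sq_nonneg γ]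
  have h3 : γ ≤ (2 * |C₀| + 2) * ‖M‖ := by
    linarith only [hkey, habs0, h2, norm_nonneg M]
  have hpos : (0 : ℝ) < 2 * |C₀| + 2 := by positivity
  calc 1 / (2 * |C₀| + 2) * γ = γ / (2 * |C₀| + 2) := by ring
    _ ≤ ‖M‖ := (div_le_iff₀ hpos).mpr (by linarith only [h3])
end

section
/- There exists a constant κ > 0, depending only on J and K, such that for all J×K real matrices U and V with orthonormal columns (UᵀU = VᵀV = I_K) and every J×J real symmetric matrix M, ‖U diag(UᵀMU) Uᵀ − V diag(VᵀMV) Vᵀ‖∞ ≤ κ ‖U − V‖∞ ‖M‖∞, where diag(N) denotes the diagonal matrix having the same diagonal entries as N. Equivalently, the orthogonal projection P_𝒟 of symmetric matrices onto the subspace 𝒟 = {U D' Uᵀ : D' a K×K diagonal matrix} is Lipschitz in U, uniformly over symmetric M of bounded entrywise norm. -/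
open Matrix

attribute [local instance] Matrix.normedAddCommGroup

private lemma entryNorm_mul_le {l m n : ℕ} (A : Matrix (Fin l) (Fin m) ℝ)
    (B : Matrix (Fin m) (Fin n) ℝ) : ‖A * B‖ ≤ (m : ℝ) * ‖A‖ * ‖B‖ := by
  have h : (0:ℝ) ≤ (m : ℝ) * ‖A‖ * ‖B‖ := by positivity
  rw [Matrix.norm_le_iff h]
  intro i j
  rw [Matrix.mul_apply]
  calc ‖∑ k, A i k * B k j‖ ≤ ∑ k, ‖A i k * B k j‖ := norm_sum_le _ _
    _ ≤ ∑ _k : Fin m, ‖A‖ * ‖B‖ := Finset.sum_le_sum (fun k _ => by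
        rw [norm_mul]
        exact mul_le_mul (Matrix.norm_entry_le_entrywise_sup_norm A)
          (Matrix.norm_entry_le_entrywise_sup_norm B) (norm_nonneg _) (norm_nonneg _))
    _ = (m : ℝ) * ‖A‖ * ‖B‖ := by
        simp [Finset.sum_const, mul_assoc]

private lemma norm_mul3_le {l m n p : ℕ} (A : Matrix (Fin l) (Fin m) ℝ)
    (B : Matrix (Fin m) (Fin n) ℝ) (C : Matrix (Fin n) (Fin p) ℝ) :
    ‖A * B * C‖ ≤ ((m : ℝ) * n) * (‖A‖ * ‖B‖ * ‖C‖) := by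
  calc ‖A * B * C‖ ≤ (n : ℝ) * ‖A * B‖ * ‖C‖ := entryNorm_mul_le _ _
    _ ≤ (n : ℝ) * ((m : ℝ) * ‖A‖ * ‖B‖) * ‖C‖ := by
        gcongr
        exact entryNorm_mul_le _ _
    _ = ((m : ℝ) * n) * (‖A‖ * ‖B‖ * ‖C‖) := by ring

private lemma norm_transpose_le' {l m : ℕ} (A : Matrix (Fin l) (Fin m) ℝ) : ‖Aᵀ‖ ≤ ‖A‖ := by
  rw [Matrix.norm_le_iff (norm_nonneg A)]
  intro i j
  exact Matrix.norm_entry_le_entrywise_sup_norm A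

private lemma norm_le_one_of_orth {J K : ℕ} (U : Matrix (Fin J) (Fin K) ℝ)
    (hU : Uᵀ * U = 1) : ‖U‖ ≤ 1 := by
  rw [Matrix.norm_le_iff zero_le_one]
  intro i k
  have h1 : (Uᵀ * U) k k = 1 := by rw [hU]; simp [Matrix.one_apply]
  rw [Matrix.mul_apply] at h1
  simp only [Matrix.transpose_apply] at h1
  have h2 : U i k * U i k ≤ ∑ j, U j k * U j k :=
    Finset.single_le_sum (f := fun j => U j k * U j k) (fun j _ => mul_self_nonneg _) (Finset.mem_univ i)
  rw [h1] at h2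
  rw [Real.norm_eq_abs]
  nlinarith [abs_nonneg (U i k), abs_mul_abs_self (U i k)]

private lemma norm_diagonal_le' {n : ℕ} (N : Matrix (Fin n) (Fin n) ℝ) :
    ‖Matrix.diagonal (fun i => N i i)‖ ≤ ‖N‖ := by
  rw [Matrix.norm_le_iff (norm_nonneg N)]
  intro i j
  by_cases h : i = j
  · subst h
    rw [Matrix.diagonal_apply_eq]
    exact Matrix.norm_entry_le_entrywise_sup_norm N
  · rw [Matrix.diagonal_apply_ne _ h]
    simp only [norm_zero]; exact norm_nonneg N

/-- Part of Lemma 8: the orthogonal projection `M ↦ U diag(Uᵀ M U) Uᵀ` of symmetric matrices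
onto the subspace `𝒟 = {U D' Uᵀ : D' diagonal}` is Lipschitz in the orthonormal frame `U`,
uniformly over symmetric `M` of bounded entrywise norm.
(Here the `Matrix` norm is the entrywise maximum norm.) -/
theorem diag_projection_lipschitz (J K : ℕ) :
    ∃ κ > (0 : ℝ), ∀ U V : Matrix (Fin J) (Fin K) ℝ,
      Uᵀ * U = 1 → Vᵀ * V = 1 →
      ∀ M : Matrix (Fin J) (Fin J) ℝ, M.IsSymm →
        ‖U * Matrix.diagonal (fun i => (Uᵀ * M * U) i i) * Uᵀ
            - V * Matrix.diagonal (fun i => (Vᵀ * M * V) i i) * Vᵀ‖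
          ≤ κ * ‖U - V‖ * ‖M‖ := by
  refine ⟨4 * (J:ℝ)^2 * (K:ℝ)^2 + 1, by positivity, ?_⟩
  intro U V hU hV M _hM
  set DU := Matrix.diagonal (fun i => (Uᵀ * M * U) i i) with hDUdef
  set DV := Matrix.diagonal (fun i => (Vᵀ * M * V) i i) with hDVdef
  have hUle : ‖U‖ ≤ 1 := norm_le_one_of_orth U hU
  have hVle : ‖V‖ ≤ 1 := norm_le_one_of_orth V hV
  have hUt : ‖Uᵀ‖ ≤ 1 := le_trans (norm_transpose_le' U) hUle
  have hVt : ‖Vᵀ‖ ≤ 1 := le_trans (norm_transpose_le' V) hVle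
  have hUVt : ‖Uᵀ - Vᵀ‖ ≤ ‖U - V‖ := by
    rw [← Matrix.transpose_sub]; exact norm_transpose_le' _
  have hDU : ‖DU‖ ≤ (J:ℝ)^2 * ‖M‖ := by
    calc ‖DU‖ ≤ ‖Uᵀ * M * U‖ := norm_diagonal_le' _
      _ ≤ ((J:ℝ) * J) * (‖Uᵀ‖ * ‖M‖ * ‖U‖) := norm_mul3_le _ _ _
      _ ≤ ((J:ℝ) * J) * (1 * ‖M‖ * 1) := by gcongr
      _ = (J:ℝ)^2 * ‖M‖ := by ring
  have hDV : ‖DV‖ ≤ (J:ℝ)^2 * ‖M‖ := by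
    calc ‖DV‖ ≤ ‖Vᵀ * M * V‖ := norm_diagonal_le' _
      _ ≤ ((J:ℝ) * J) * (‖Vᵀ‖ * ‖M‖ * ‖V‖) := norm_mul3_le _ _ _
      _ ≤ ((J:ℝ) * J) * (1 * ‖M‖ * 1) := by gcongr
      _ = (J:ℝ)^2 * ‖M‖ := by ring
  have hDdiff : ‖DU - DV‖ ≤ 2 * (J:ℝ)^2 * (‖U - V‖ * ‖M‖) := by
    have hdiag : DU - DV = Matrix.diagonal (fun i => (Uᵀ * M * U - Vᵀ * M * V) i i) := by
      rw [hDUdef, hDVdef]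
      simp only [Matrix.sub_apply]
      exact Matrix.diagonal_sub _ _
    have hN : Uᵀ * M * U - Vᵀ * M * V = (Uᵀ - Vᵀ) * M * U + Vᵀ * M * (U - V) := by
      simp only [Matrix.sub_mul, Matrix.mul_sub]
      abel
    calc ‖DU - DV‖ = ‖Matrix.diagonal (fun i => (Uᵀ * M * U - Vᵀ * M * V) i i)‖ := by
          rw [hdiag]
      _ ≤ ‖Uᵀ * M * U - Vᵀ * M * V‖ := norm_diagonal_le' _
      _ = ‖(Uᵀ - Vᵀ) * M * U + Vᵀ * M * (U - V)‖ := by rw [hN]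
      _ ≤ ‖(Uᵀ - Vᵀ) * M * U‖ + ‖Vᵀ * M * (U - V)‖ := norm_add_le _ _
      _ ≤ ((J:ℝ) * J) * (‖Uᵀ - Vᵀ‖ * ‖M‖ * ‖U‖) + ((J:ℝ) * J) * (‖Vᵀ‖ * ‖M‖ * ‖U - V‖) :=
          add_le_add (norm_mul3_le _ _ _) (norm_mul3_le _ _ _)
      _ ≤ ((J:ℝ) * J) * (‖U - V‖ * ‖M‖ * 1) + ((J:ℝ) * J) * (1 * ‖M‖ * ‖U - V‖) := by gcongr
      _ = 2 * (J:ℝ)^2 * (‖U - V‖ * ‖M‖) := by ring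
  have key : U * DU * Uᵀ - V * DV * Vᵀ
      = (U - V) * DU * Uᵀ + V * (DU - DV) * Uᵀ + V * DV * (Uᵀ - Vᵀ) := by
    simp only [Matrix.sub_mul, Matrix.mul_sub]
    abel
  have hT1 : ‖(U - V) * DU * Uᵀ‖ ≤ (J:ℝ)^2 * (K:ℝ)^2 * (‖U - V‖ * ‖M‖) := by
    calc ‖(U - V) * DU * Uᵀ‖ ≤ ((K:ℝ) * K) * (‖U - V‖ * ‖DU‖ * ‖Uᵀ‖) := norm_mul3_le _ _ _
      _ ≤ ((K:ℝ) * K) * (‖U - V‖ * ((J:ℝ)^2 * ‖M‖) * 1) := by gcongr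
      _ = (J:ℝ)^2 * (K:ℝ)^2 * (‖U - V‖ * ‖M‖) := by ring
  have hT2 : ‖V * (DU - DV) * Uᵀ‖ ≤ 2 * (J:ℝ)^2 * (K:ℝ)^2 * (‖U - V‖ * ‖M‖) := by
    calc ‖V * (DU - DV) * Uᵀ‖ ≤ ((K:ℝ) * K) * (‖V‖ * ‖DU - DV‖ * ‖Uᵀ‖) := norm_mul3_le _ _ _
      _ ≤ ((K:ℝ) * K) * (1 * (2 * (J:ℝ)^2 * (‖U - V‖ * ‖M‖)) * 1) := by gcongr
      _ = 2 * (J:ℝ)^2 * (K:ℝ)^2 * (‖U - V‖ * ‖M‖) := by ring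
  have hT3 : ‖V * DV * (Uᵀ - Vᵀ)‖ ≤ (J:ℝ)^2 * (K:ℝ)^2 * (‖U - V‖ * ‖M‖) := by
    calc ‖V * DV * (Uᵀ - Vᵀ)‖ ≤ ((K:ℝ) * K) * (‖V‖ * ‖DV‖ * ‖Uᵀ - Vᵀ‖) := norm_mul3_le _ _ _
      _ ≤ ((K:ℝ) * K) * (1 * ((J:ℝ)^2 * ‖M‖) * ‖U - V‖) := by gcongr
      _ = (J:ℝ)^2 * (K:ℝ)^2 * (‖U - V‖ * ‖M‖) := by ring
  calc ‖U * DU * Uᵀ - V * DV * Vᵀ‖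
      = ‖(U - V) * DU * Uᵀ + V * (DU - DV) * Uᵀ + V * DV * (Uᵀ - Vᵀ)‖ := by rw [key]
    _ ≤ ‖(U - V) * DU * Uᵀ + V * (DU - DV) * Uᵀ‖ + ‖V * DV * (Uᵀ - Vᵀ)‖ := norm_add_le _ _
    _ ≤ ‖(U - V) * DU * Uᵀ‖ + ‖V * (DU - DV) * Uᵀ‖ + ‖V * DV * (Uᵀ - Vᵀ)‖ := by
        have := norm_add_le ((U - V) * DU * Uᵀ) (V * (DU - DV) * Uᵀ)
        linarith
    _ ≤ (4 * (J:ℝ)^2 * (K:ℝ)^2 + 1) * ‖U - V‖ * ‖M‖ := by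
        nlinarith [norm_nonneg (U - V), norm_nonneg M, mul_nonneg (norm_nonneg (U-V)) (norm_nonneg M)]
end

section
/- Let U = [U₁, U₂] be a J×J real orthogonal matrix, where U₁ consists of its first K columns and U₂ of its last J−K columns. Let T = {U₁ Y + Yᵀ U₁ᵀ : Y ∈ ℝ^{K×J}}, a linear subspace of the space of J×J real symmetric matrices. Then for every J×J real symmetric matrix M, the orthogonal projection of M onto T with respect to the trace inner product equals M − U₂U₂ᵀ M U₂U₂ᵀ, and the orthogonal projection of M onto the orthogonal complement of T within the symmetric matrices equals U₂U₂ᵀ M U₂U₂ᵀ. -/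
open Matrix

/-- Projection formula from the proof of Lemma 8: if `U = [U₁, U₂]` is orthogonal and
`T = {U₁ Y + Yᵀ U₁ᵀ}` is the tangent space, then for symmetric `M` the orthogonal projection
(trace inner product) of `M` onto `T` is `M − U₂U₂ᵀ M U₂U₂ᵀ`, and the projection onto the
orthogonal complement of `T` within the symmetric matrices is `U₂U₂ᵀ M U₂U₂ᵀ`.
This is expressed by: `M − U₂U₂ᵀMU₂U₂ᵀ ∈ T`, the remainder `U₂U₂ᵀMU₂U₂ᵀ` is symmetric, and
it is trace-orthogonal to every element of `T`. -/
theorem tangent_space_projection_formula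
    (J K : ℕ) (U1 : Matrix (Fin J) (Fin K) ℝ) (U2 : Matrix (Fin J) (Fin (J - K)) ℝ)
    (horth : (Matrix.fromCols U1 U2)ᵀ * Matrix.fromCols U1 U2 = 1)
    (M : Matrix (Fin J) (Fin J) ℝ) (hM : M.IsSymm) :
    (∃ Y : Matrix (Fin K) (Fin J) ℝ,
        M - U2 * U2ᵀ * M * (U2 * U2ᵀ) = U1 * Y + Yᵀ * U1ᵀ) ∧
    (U2 * U2ᵀ * M * (U2 * U2ᵀ)).IsSymm ∧
    (∀ Y : Matrix (Fin K) (Fin J) ℝ,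
        Matrix.trace ((U2 * U2ᵀ * M * (U2 * U2ᵀ)) * (U1 * Y + Yᵀ * U1ᵀ)ᵀ) = 0) := by
  have hMs : Mᵀ = M := hM
  have horth' : fromBlocks (U1ᵀ*U1) (U1ᵀ*U2) (U2ᵀ*U1) (U2ᵀ*U2)
      = fromBlocks (1 : Matrix (Fin K) (Fin K) ℝ) 0 0 (1 : Matrix (Fin (J-K)) (Fin (J-K)) ℝ) := by
    rw [← fromRows_mul_fromCols, ← transpose_fromCols, horth]
    exact fromBlocks_one.symm
  have h11 : U1ᵀ * U1 = 1 := by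
    have := congrArg Matrix.toBlocks₁₁ horth'; simpa [-Matrix.fromBlocks_one] using this
  have h12 : U1ᵀ * U2 = 0 := by
    have := congrArg Matrix.toBlocks₁₂ horth'; simpa [-Matrix.fromBlocks_one] using this
  have h21 : U2ᵀ * U1 = 0 := by
    have := congrArg Matrix.toBlocks₂₁ horth'; simpa [-Matrix.fromBlocks_one] using this
  have hK : K ≤ J := by
    have h1 : (U1ᵀ * U1).rank = K := by rw [h11, Matrix.rank_one, Fintype.card_fin]
    have h2 : (U1ᵀ * U1).rank ≤ J := by
      refine (Matrix.rank_mul_le_left _ _).trans ?_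
      simpa using Matrix.rank_le_card_width U1ᵀ
    omega
  have e : Fin J ≃ Fin K ⊕ Fin (J - K) :=
    (finCongr (Nat.add_sub_cancel' hK).symm).trans finSumFinEquiv.symm
  have huut : fromCols U1 U2 * fromRows U1ᵀ U2ᵀ = 1 := by
    rw [fromCols_mul_fromRows_eq_one_comm e]
    rw [← transpose_fromCols]; exact horth
  have hsum : U1 * U1ᵀ + U2 * U2ᵀ = 1 := by
    rw [← fromCols_mul_fromRows U1 U2 U1ᵀ U2ᵀ]; exact huut
  have hP : U2 * U2ᵀ = 1 - U1 * U1ᵀ := by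
    rw [← hsum]; abel
  have h12' : ∀ X : Matrix (Fin (J-K)) (Fin J) ℝ, U1ᵀ * (U2 * X) = 0 := fun X => by
    rw [← Matrix.mul_assoc, h12, Matrix.zero_mul]
  have h21' : ∀ X : Matrix (Fin K) (Fin J) ℝ, U2ᵀ * (U1 * X) = 0 := fun X => by
    rw [← Matrix.mul_assoc, h21, Matrix.zero_mul]
  refine ⟨?_, ?_, ?_⟩
  · refine ⟨U1ᵀ * M - (1/2 : ℝ) • (U1ᵀ * M * (U1 * U1ᵀ)), ?_⟩
    rw [hP]
    simp only [transpose_sub, transpose_smul, transpose_mul, transpose_transpose, hMs,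
      Matrix.mul_sub, Matrix.sub_mul, Matrix.mul_add, Matrix.add_mul,
      Matrix.mul_one, Matrix.one_mul, Matrix.smul_mul, Matrix.mul_smul,
      Matrix.mul_assoc, smul_sub]
    module
  · show _ = _
    simp [Matrix.transpose_mul, Matrix.mul_assoc, hMs]
  · intro Y
    rw [transpose_add, transpose_mul, transpose_mul, transpose_transpose, transpose_transpose,
      Matrix.mul_add, Matrix.trace_add,
      Matrix.trace_mul_comm (U2 * U2ᵀ * M * (U2 * U2ᵀ)) (Yᵀ * U1ᵀ)]
    simp [Matrix.mul_assoc, h12', h21']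
end

section
/- Let U₁ be a J×K real matrix with orthonormal columns (U₁ᵀU₁ = I_K), and let 𝒟 = {U₁ D' U₁ᵀ : D' a K×K diagonal matrix}, a linear subspace of the J×J real symmetric matrices. Then for every J×J real symmetric matrix M, the orthogonal projection of M onto 𝒟 with respect to the trace inner product equals U₁ diag(U₁ᵀ M U₁) U₁ᵀ, where diag(N) denotes the diagonal matrix with the same diagonal entries as N. -/
open Matrix

/-- Projection formula from the proof of Lemma 8: for `U₁` with orthonormal columns and
`𝒟 = {U₁ D' U₁ᵀ : D' diagonal}`, the orthogonal projection (trace inner product) of a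
symmetric `M` onto `𝒟` equals `U₁ diag(U₁ᵀ M U₁) U₁ᵀ`: this matrix lies in `𝒟` and the
residual is trace-orthogonal to every element of `𝒟`. -/
theorem diag_projection_formula
    (J K : ℕ) (U1 : Matrix (Fin J) (Fin K) ℝ) (hU : U1ᵀ * U1 = 1)
    (M : Matrix (Fin J) (Fin J) ℝ) (hM : M.IsSymm) :
    (∃ D' : Fin K → ℝ,
        U1 * Matrix.diagonal (fun i => (U1ᵀ * M * U1) i i) * U1ᵀ
          = U1 * Matrix.diagonal D' * U1ᵀ) ∧
    (∀ D' : Fin K → ℝ,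
        Matrix.trace ((M - U1 * Matrix.diagonal (fun i => (U1ᵀ * M * U1) i i) * U1ᵀ)
          * (U1 * Matrix.diagonal D' * U1ᵀ)ᵀ) = 0) := by
  constructor
  · exact ⟨_, rfl⟩
  · intro D'
    have hsymm : (U1 * Matrix.diagonal D' * U1ᵀ)ᵀ = U1 * Matrix.diagonal D' * U1ᵀ := by
      simp [Matrix.transpose_mul, Matrix.diagonal_transpose, Matrix.mul_assoc]
    rw [hsymm, Matrix.sub_mul, Matrix.trace_sub]
    have h1 : Matrix.trace (M * (U1 * Matrix.diagonal D' * U1ᵀ))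
        = Matrix.trace (Matrix.diagonal (fun i => (U1ᵀ * M * U1) i i)
            * Matrix.diagonal D') := by
      rw [show M * (U1 * Matrix.diagonal D' * U1ᵀ) = M * U1 * Matrix.diagonal D' * U1ᵀ by
        simp only [Matrix.mul_assoc], Matrix.trace_mul_comm, ← Matrix.mul_assoc,
        ← Matrix.mul_assoc]
      simp [Matrix.trace, Matrix.diag, Matrix.mul_diagonal]
    have h2 : Matrix.trace (U1 * Matrix.diagonal (fun i => (U1ᵀ * M * U1) i i) * U1ᵀ
        * (U1 * Matrix.diagonal D' * U1ᵀ))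
        = Matrix.trace (Matrix.diagonal (fun i => (U1ᵀ * M * U1) i i)
            * Matrix.diagonal D') := by
      rw [Matrix.trace_mul_comm]
      rw [show U1 * Matrix.diagonal D' * U1ᵀ
          * (U1 * Matrix.diagonal (fun i => (U1ᵀ * M * U1) i i) * U1ᵀ)
          = U1 * (Matrix.diagonal D'
              * (U1ᵀ * U1) * Matrix.diagonal (fun i => (U1ᵀ * M * U1) i i)) * U1ᵀ by
        simp only [Matrix.mul_assoc]]
      rw [hU, Matrix.mul_one, Matrix.trace_mul_comm, ← Matrix.mul_assoc, ← Matrix.mul_assoc,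
        hU, Matrix.one_mul, Matrix.trace_mul_comm]
    rw [h1, h2, sub_self]
end

section
/- Let M̄ be any J×J real matrix and let L̄ and S̄ be J×J real symmetric matrices. Then the unique minimizer of the function (M, L, S) ↦ ½‖M − M̄‖_F² + ½‖L − L̄‖_F² + ½‖S − S̄‖_F², over triples of J×J real matrices subject to the constraints that M is symmetric and M = L + S, is given by M̃ = (1/3)M̄ + (1/3)M̄ᵀ + (1/3)L̄ + (1/3)S̄, L̃ = (2/3)L̄ + (1/6)M̄ + (1/6)M̄ᵀ − (1/3)S̄, and S̃ = (2/3)S̄ + (1/6)M̄ + (1/6)M̄ᵀ − (1/3)L̄. -/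
open Matrix

/-- Squared Frobenius norm `‖A‖_F² = Σ_{i,j} A_ij²`. -/
noncomputable def frobSq16 {J : ℕ} (A : Matrix (Fin J) (Fin J) ℝ) : ℝ := ∑ i, ∑ j, (A i j) ^ 2

noncomputable def ip16 {J : ℕ} (A B : Matrix (Fin J) (Fin J) ℝ) : ℝ := ∑ i, ∑ j, A i j * B i j

lemma frobSq16_nonneg {J : ℕ} (A : Matrix (Fin J) (Fin J) ℝ) : 0 ≤ frobSq16 A :=
  Finset.sum_nonneg fun _ _ => Finset.sum_nonneg fun _ _ => sq_nonneg _

lemma frobSq16_eq_zero {J : ℕ} {A : Matrix (Fin J) (Fin J) ℝ} (h : frobSq16 A = 0) : A = 0 := by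
  ext i j
  have h1 := (Finset.sum_eq_zero_iff_of_nonneg
    (fun i _ => Finset.sum_nonneg fun j _ => sq_nonneg (A i j))).1 h i (Finset.mem_univ i)
  have h2 := (Finset.sum_eq_zero_iff_of_nonneg
    (fun j _ => sq_nonneg (A i j))).1 h1 j (Finset.mem_univ j)
  simpa using pow_eq_zero_iff (n := 2) (by norm_num) |>.1 h2

lemma frobSq16_expand {J : ℕ} (A B : Matrix (Fin J) (Fin J) ℝ) :
    frobSq16 (A + B) = frobSq16 A + 2 * ip16 A B + frobSq16 B := by
  have h : ∀ i j : Fin J, (A i j + B i j) ^ 2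
      = A i j ^ 2 + 2 * (A i j * B i j) + B i j ^ 2 := fun i j => by ring
  simp_rw [frobSq16, ip16, Matrix.add_apply, h, Finset.sum_add_distrib, Finset.mul_sum]

lemma ip16_add_right {J : ℕ} (A B C : Matrix (Fin J) (Fin J) ℝ) :
    ip16 A (B + C) = ip16 A B + ip16 A C := by
  simp_rw [ip16, Matrix.add_apply, mul_add, Finset.sum_add_distrib]

lemma ip16_add_left {J : ℕ} (A B C : Matrix (Fin J) (Fin J) ℝ) :
    ip16 (A + B) C = ip16 A C + ip16 B C := by
  simp_rw [ip16, Matrix.add_apply, add_mul, Finset.sum_add_distrib]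

lemma ip16_skew {J : ℕ} {A S : Matrix (Fin J) (Fin J) ℝ} (hA : Aᵀ = -A) (hS : Sᵀ = S) :
    ip16 A S = 0 := by
  have hA' : ∀ i j, A i j = -A j i := fun i j => by
    have := congrFun (congrFun hA j) i
    simpa [Matrix.transpose_apply, Matrix.neg_apply] using this
  have hS' : ∀ i j, S i j = S j i := fun i j => by
    have := congrFun (congrFun hS j) i
    simpa [Matrix.transpose_apply] using this
  have key : ip16 A S = -ip16 A S := by
    calc ip16 A S = ∑ j, ∑ i, A i j * S i j := Finset.sum_comm
    _ = ∑ j, ∑ i, -(A j i * S j i) := by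
        refine Finset.sum_congr rfl fun j _ => Finset.sum_congr rfl fun i _ => ?_
        rw [hA' i j, hS' i j]; ring
    _ = -ip16 A S := by simp [ip16]
  linarith

/-- Closed-form solution of the consensus projection (Step 2 of the ADMM algorithm): for any
`M̄` and symmetric `L̄`, `S̄`, the unique minimizer of
`½‖M − M̄‖_F² + ½‖L − L̄‖_F² + ½‖S − S̄‖_F²` subject to `M` symmetric and `M = L + S` is
`M̃ = ⅓M̄ + ⅓M̄ᵀ + ⅓L̄ + ⅓S̄`, `L̃ = ⅔L̄ + ⅙M̄ + ⅙M̄ᵀ − ⅓S̄`, `S̃ = ⅔S̄ + ⅙M̄ + ⅙M̄ᵀ − ⅓L̄`. -/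
theorem admm_consensus_projection
    (J : ℕ) (Mb Lb Sb : Matrix (Fin J) (Fin J) ℝ) (hLb : Lb.IsSymm) (hSb : Sb.IsSymm) :
    let Mt := (1/3 : ℝ) • Mb + (1/3 : ℝ) • Mbᵀ + (1/3 : ℝ) • Lb + (1/3 : ℝ) • Sb
    let Lt := (2/3 : ℝ) • Lb + (1/6 : ℝ) • Mb + (1/6 : ℝ) • Mbᵀ - (1/3 : ℝ) • Sb
    let St := (2/3 : ℝ) • Sb + (1/6 : ℝ) • Mb + (1/6 : ℝ) • Mbᵀ - (1/3 : ℝ) • Lb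
    (Mt.IsSymm ∧ Mt = Lt + St) ∧
    (∀ M L S : Matrix (Fin J) (Fin J) ℝ, M.IsSymm → M = L + S →
      frobSq16 (Mt - Mb) / 2 + frobSq16 (Lt - Lb) / 2 + frobSq16 (St - Sb) / 2
        ≤ frobSq16 (M - Mb) / 2 + frobSq16 (L - Lb) / 2 + frobSq16 (S - Sb) / 2) ∧
    (∀ M L S : Matrix (Fin J) (Fin J) ℝ, M.IsSymm → M = L + S →
      frobSq16 (M - Mb) / 2 + frobSq16 (L - Lb) / 2 + frobSq16 (S - Sb) / 2
          = frobSq16 (Mt - Mb) / 2 + frobSq16 (Lt - Lb) / 2 + frobSq16 (St - Sb) / 2 →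
      M = Mt ∧ L = Lt ∧ S = St) := by
  intro Mt Lt St
  have hLb' : Lbᵀ = Lb := hLb
  have hSb' : Sbᵀ = Sb := hSb
  have hMtSymm : Mt.IsSymm := by
    show Mtᵀ = Mt
    show ((1/3 : ℝ) • Mb + (1/3 : ℝ) • Mbᵀ + (1/3 : ℝ) • Lb + (1/3 : ℝ) • Sb)ᵀ
      = ((1/3 : ℝ) • Mb + (1/3 : ℝ) • Mbᵀ + (1/3 : ℝ) • Lb + (1/3 : ℝ) • Sb)
    simp only [Matrix.transpose_add, Matrix.transpose_smul, Matrix.transpose_transpose,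
      hLb', hSb']
    abel_nf
  have hMtLS : Mt = Lt + St := by
    show Mt = _
    show ((1/3 : ℝ) • Mb + (1/3 : ℝ) • Mbᵀ + (1/3 : ℝ) • Lb + (1/3 : ℝ) • Sb) = _
    module
  -- key: sum of differences is skew
  have hskew : ((Mt - Mb) + (Lt - Lb))ᵀ = -((Mt - Mb) + (Lt - Lb)) := by
    have : (Mt - Mb) + (Lt - Lb) = (1/2 : ℝ) • Mbᵀ - (1/2 : ℝ) • Mb := by
      show ((1/3 : ℝ) • Mb + (1/3 : ℝ) • Mbᵀ + (1/3 : ℝ) • Lb + (1/3 : ℝ) • Sb - Mb)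
        + ((2/3 : ℝ) • Lb + (1/6 : ℝ) • Mb + (1/6 : ℝ) • Mbᵀ - (1/3 : ℝ) • Sb - Lb) = _
      module
    rw [this]
    simp only [Matrix.transpose_sub, Matrix.transpose_smul, Matrix.transpose_transpose]
    module
  have hDeq : Lt - Lb = St - Sb := by
    show ((2/3 : ℝ) • Lb + (1/6 : ℝ) • Mb + (1/6 : ℝ) • Mbᵀ - (1/3 : ℝ) • Sb) - Lb
      = ((2/3 : ℝ) • Sb + (1/6 : ℝ) • Mb + (1/6 : ℝ) • Mbᵀ - (1/3 : ℝ) • Lb) - Sb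
    module
  -- the cross term vanishes for any feasible point
  have hcross : ∀ M L S : Matrix (Fin J) (Fin J) ℝ, M.IsSymm → M = L + S →
      ip16 (Mt - Mb) (M - Mt) + ip16 (Lt - Lb) (L - Lt) + ip16 (St - Sb) (S - St) = 0 := by
    intro M L S hM hMLS
    have hΔ : (L - Lt) + (S - St) = M - Mt := by rw [hMLS, hMtLS]; abel
    have hsymΔ : (M - Mt)ᵀ = M - Mt := by
      rw [Matrix.transpose_sub, hM, hMtSymm]
    calc ip16 (Mt - Mb) (M - Mt) + ip16 (Lt - Lb) (L - Lt) + ip16 (St - Sb) (S - St)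
        = ip16 (Mt - Mb) (M - Mt) + (ip16 (Lt - Lb) (L - Lt) + ip16 (Lt - Lb) (S - St)) := by
          rw [hDeq]; ring
      _ = ip16 (Mt - Mb) (M - Mt) + ip16 (Lt - Lb) (M - Mt) := by
          rw [← ip16_add_right, hΔ]
      _ = ip16 ((Mt - Mb) + (Lt - Lb)) (M - Mt) := (ip16_add_left _ _ _).symm
      _ = 0 := ip16_skew hskew hsymΔ
  -- quadratic expansion of the objective at the candidate
  have hexp : ∀ M L S : Matrix (Fin J) (Fin J) ℝ, M.IsSymm → M = L + S →
      frobSq16 (M - Mb) / 2 + frobSq16 (L - Lb) / 2 + frobSq16 (S - Sb) / 2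
        = frobSq16 (Mt - Mb) / 2 + frobSq16 (Lt - Lb) / 2 + frobSq16 (St - Sb) / 2
          + (frobSq16 (M - Mt) + frobSq16 (L - Lt) + frobSq16 (S - St)) / 2 := by
    intro M L S hM hMLS
    have e1 : M - Mb = (Mt - Mb) + (M - Mt) := by abel
    have e2 : L - Lb = (Lt - Lb) + (L - Lt) := by abel
    have e3 : S - Sb = (St - Sb) + (S - St) := by abel
    rw [e1, e2, e3, frobSq16_expand, frobSq16_expand, frobSq16_expand]
    have := hcross M L S hM hMLS
    linarith
  refine ⟨⟨hMtSymm, hMtLS⟩, ?_, ?_⟩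
  · intro M L S hM hMLS
    rw [hexp M L S hM hMLS]
    have := frobSq16_nonneg (M - Mt)
    have := frobSq16_nonneg (L - Lt)
    have := frobSq16_nonneg (S - St)
    linarith
  · intro M L S hM hMLS heq
    rw [hexp M L S hM hMLS] at heq
    have h1 := frobSq16_nonneg (M - Mt)
    have h2 := frobSq16_nonneg (L - Lt)
    have h3 := frobSq16_nonneg (S - St)
    have hM0 : M - Mt = 0 := frobSq16_eq_zero (by linarith)
    have hL0 : L - Lt = 0 := frobSq16_eq_zero (by linarith)
    have hS0 : S - St = 0 := frobSq16_eq_zero (by linarith)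
    exact ⟨sub_eq_zero.1 hM0, sub_eq_zero.1 hL0, sub_eq_zero.1 hS0⟩
end
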